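/- A connected convex bipartite graph G with |X| = |Y| has a Hamiltonian cycle if and only if the interval graph I obtained from G (by making any two Y-vertices with intersecting X-neighborhoods adjacent) has a Hamiltonian cycle. -/

import Mathlib

open Finset SimpleGraph

/-- A convex bipartite graph with parts `X = Fin n` (with its natural order giving the
convex ordering) and `Y`: each `y : Y` has a consecutive neighborhood in `Fin n`. -/
structure ConvexBip (n : ℕ) (Y : Type*) where
  adj : Fin n → Y → Prop
  convex : ∀ (y : Y) (i₁ i₂ i₃ : Fin n),
    i₁ ≤ i₂ → i₂ ≤ i₃ → adj i₁ y → adj i₃ y → adj i₂ y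

namespace ConvexBip

variable {n : ℕ} {Y : Type*}

/-- The underlying bipartite simple graph on `Fin n ⊕ Y`. -/
def toGraph (G : ConvexBip n Y) : SimpleGraph (Fin n ⊕ Y) where
  Adj u v := (∃ i y, u = Sum.inl i ∧ v = Sum.inr y ∧ G.adj i y) ∨
             (∃ i y, u = Sum.inr y ∧ v = Sum.inl i ∧ G.adj i y)
  symm := by constructor; rintro u v (⟨i, y, rfl, rfl, h⟩ | ⟨i, y, rfl, rfl, h⟩)
             · exact Or.inr ⟨i, y, rfl, rfl, h⟩
             · exact Or.inl ⟨i, y, rfl, rfl, h⟩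
  loopless := ⟨by rintro u (⟨i, y, rfl, h, _⟩ | ⟨i, y, rfl, h, _⟩) <;> simp_all⟩

/-- `N_G[X_{p..q}]`: the set of `y ∈ Y` whose whole neighborhood lies in `{x_p, …, x_q}`. -/
def NIn (G : ConvexBip n Y) (p q : Fin n) : Set Y :=
  {y | ∀ i, G.adj i y → p ≤ i ∧ i ≤ q}

/-- `N'_G[X_{p..q}]`: the set of `y ∈ Y` having at least two neighbors in `{x_p, …, x_q}`. -/
noncomputable def NIn' (G : ConvexBip n Y) (p q : Fin n) : Set Y :=
  {y | 2 ≤ {i : Fin n | G.adj i y ∧ p ≤ i ∧ i ≤ q}.ncard}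

/-- Degree of a vertex `y ∈ Y`. -/
noncomputable def degY (G : ConvexBip n Y) (y : Y) : ℕ := {i : Fin n | G.adj i y}.ncard

/-- Property A. -/
def PropertyA (G : ConvexBip n Y) : Prop :=
  (∀ p q : Fin n, p < q →
      ((p.val = 0 ∧ q.val < n - 1) ∨ (0 < p.val ∧ q.val = n - 1) ∨
        (0 < p.val ∧ q.val < n - 1)) →
      (G.NIn p q).ncard ≤ q.val - p.val) ∧
  (∀ (k : ℕ) (p q : Fin k → Fin n), 1 ≤ k → k ≤ n - 1 →
      (∀ i, p i < q i) → (∀ i i' : Fin k, i < i' → q i ≤ p i') →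
      (∑ i, ((q i).val - (p i).val)) ≤ (⋃ i, G.NIn' (p i) (q i)).ncard) ∧
  (∀ hn : 0 < n,
      (G.NIn ⟨0, hn⟩ ⟨n - 1, by omega⟩).ncard = n ∧
      (G.NIn' ⟨0, hn⟩ ⟨n - 1, by omega⟩).ncard = n)

/-- Property B. -/
def PropertyB (G : ConvexBip n Y) : Prop :=
  (∀ p q : Fin n, p < q →
      ((p.val = 0 ∧ q.val < n - 1) ∨ (0 < p.val ∧ q.val = n - 1) ∨
        (0 < p.val ∧ q.val < n - 1)) →
      (G.NIn p q).ncard ≤ q.val - p.val + 1) ∧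
  (∀ hn : 0 < n, (G.NIn ⟨0, hn⟩ ⟨n - 1, by omega⟩).ncard ≤ n + 1) ∧
  (∀ (k : ℕ) (p q : Fin k → Fin n), 1 ≤ k → k ≤ n - 1 →
      (∀ i, p i < q i) → (∀ i i' : Fin k, i < i' → q i ≤ p i') →
      (∑ i, ((q i).val - (p i).val)) ≤ (⋃ i, G.NIn' (p i) (q i)).ncard) ∧
  ({y : Y | G.degY y = 1}.ncard ≤ 2 ∧
    (2 ≤ n → ∀ (i : Fin n) (y y' : Y), y ≠ y' → G.degY y = 1 → G.degY y' = 1 →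
      G.adj i y → G.adj i y' → False))

/-- The interval `X_{p..q}` is maximal: `|N_G[X_{p..q}]| = q - p + 1` and no strictly
larger interval (within indices 2..n-1) has the analogous property. -/
def IsMaximalInt (G : ConvexBip n Y) (p q : Fin n) : Prop :=
  (G.NIn p q).ncard = q.val - p.val + 1 ∧
  ¬ ∃ p' q' : Fin n, 0 < p'.val ∧ q'.val < n - 1 ∧ p' ≤ p ∧ q ≤ q' ∧
      (p' < p ∨ q < q') ∧ (G.NIn p' q').ncard = q'.val - p'.val + 1

/-- Monotone convex bipartite graph. -/
def IsMonotone (G : ConvexBip n Y) : Prop :=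
  G.PropertyB ∧
  (¬ ∃ (y : Y) (k : Fin n), G.degY y = 1 ∧ G.adj k y ∧ 0 < k.val ∧ k.val < n - 1) ∧
  (¬ ∃ p q : Fin n, 0 < p.val ∧ p < q ∧ q.val < n - 1 ∧ G.IsMaximalInt p q)

/-- Non-monotone convex bipartite graph (satisfying Property B). -/
def IsNonMonotone (G : ConvexBip n Y) : Prop :=
  G.PropertyB ∧
  ((∃ (y : Y) (k : Fin n), G.degY y = 1 ∧ G.adj k y ∧ 0 < k.val ∧ k.val < n - 1) ∨
   (∃ p q : Fin n, 0 < p.val ∧ p < q ∧ q.val < n - 1 ∧ G.IsMaximalInt p q))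

/-- The interval graph obtained from `G`: keep all edges of `G` and make two distinct
`Y`-vertices adjacent whenever their neighborhoods in `X` intersect. -/
def intervalGraph (G : ConvexBip n Y) : SimpleGraph (Fin n ⊕ Y) where
  Adj u v := G.toGraph.Adj u v ∨
    (∃ y y', u = Sum.inr y ∧ v = Sum.inr y' ∧ y ≠ y' ∧ ∃ i, G.adj i y ∧ G.adj i y')
  symm := by
    constructor
    rintro u v (h | ⟨y, y', rfl, rfl, hne, i, h1, h2⟩)
    · exact Or.inl h.symm
    · exact Or.inr ⟨y', y, rfl, rfl, hne.symm, i, h2, h1⟩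
  loopless := by
    constructor
    rintro u (h | ⟨y, y', rfl, h, hne, _⟩)
    · exact G.toGraph.loopless.irrefl u h
    · exact hne (Sum.inr.inj h)

/-- `G` has a Hamiltonian cycle. -/
def HasHamCycle {V : Type*} [DecidableEq V] (H : SimpleGraph V) : Prop :=
  ∃ (v : V) (c : H.Walk v v), c.IsHamiltonianCycle

/-- `G` has a Hamiltonian path. -/
def HasHamPath {V : Type*} [DecidableEq V] (H : SimpleGraph V) : Prop :=
  ∃ (u v : V) (p : H.Walk u v), p.IsHamiltonian

/-- A maximal clique of a simple graph. -/
def IsMaxClique {V : Type*} (H : SimpleGraph V) (s : Set V) : Prop :=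
  H.IsClique s ∧ ∀ t : Set V, H.IsClique t → s ⊆ t → s = t

end ConvexBip



section Aux

variable {V : Type*} [DecidableEq V]

/-- In a cycle, every support vertex is incident to at least two edges. -/
lemma two_le_countP_edges {H : SimpleGraph V} {v : V} {c : H.Walk v v}
    (hc : c.IsCycle) {x : V} (hx : x ∈ c.support) :
    2 ≤ c.edges.countP (fun e => x ∈ e) := by
  have key : ∀ (q : H.Walk x x), q.IsCycle → 0 < q.edges.countP (fun e => x ∈ e) := by
    intro q hq
    cases q with
    | nil => exact absurd rfl hq.ne_nil
    | cons h p =>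
      rw [List.countP_pos_iff]
      exact ⟨_, List.mem_cons_self, by simp⟩
  have hq : (c.rotate x hx).IsCycle := hc.rotate hx
  have hperm : (c.rotate x hx).edges ~r c.edges := c.rotate_edges x hx
  rw [← hperm.perm.countP_eq]
  have heven : Even ((c.rotate x hx).edges.countP (fun e => x ∈ e)) :=
    (hq.isTrail.even_countP_edges_iff x).2 (fun h => absurd rfl h)
  have hpos := key _ hq
  obtain ⟨k, hk⟩ := heven
  omega

lemma list_sum_le {l : List ℕ} (h1 : ∀ x ∈ l, x ≤ 1) : l.sum ≤ l.length := by
  induction l with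
  | nil => simp
  | cons a t ih =>
    simp only [List.sum_cons, List.length_cons]
    have := h1 a (List.mem_cons_self)
    have := ih (fun x hx => h1 x (List.mem_cons_of_mem _ hx))
    omega

lemma list_sum_lt {l : List ℕ} (h1 : ∀ x ∈ l, x ≤ 1) (h0 : 0 ∈ l) : l.sum < l.length := by
  induction l with
  | nil => simp at h0
  | cons a t ih =>
    simp only [List.sum_cons, List.length_cons]
    rcases List.mem_cons.mp h0 with h | h
    · have := list_sum_le (fun x hx => h1 x (List.mem_cons_of_mem _ hx))
      omega
    · have := ih (fun x hx => h1 x (List.mem_cons_of_mem _ hx)) h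
      have := h1 a (List.mem_cons_self)
      omega

lemma sum_countP_eq {α ι : Type*} [Fintype ι] (p : ι → Sym2 α → Prop)
    [∀ i e, Decidable (p i e)] (L : List (Sym2 α)) :
    ∑ i : ι, L.countP (fun e => decide (p i e))
      = (L.map (fun e => ∑ i : ι, if p i e then 1 else 0)).sum := by
  induction L with
  | nil => simp
  | cons e t ih =>
    simp only [List.countP_cons, List.map_cons, List.sum_cons, decide_eq_true_eq]
    rw [Finset.sum_add_distrib, ih]
    omega

end Aux

/-- Müller: a connected convex bipartite graph `G` with `|X| = |Y|` has a
Hamiltonian cycle iff its derived interval graph `I` has a Hamiltonian cycle. -/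
theorem stmt_12 {n : ℕ} {Y : Type*} [Fintype Y] [DecidableEq Y]
    (G : ConvexBip n Y) (hconn : G.toGraph.Connected) (hcard : Fintype.card Y = n) :
    ConvexBip.HasHamCycle G.toGraph ↔ ConvexBip.HasHamCycle G.intervalGraph := by
  constructor
  · rintro ⟨v, c, hc⟩
    have hle : G.toGraph ≤ G.intervalGraph := fun u w h => Or.inl h
    exact ⟨v, c.map (SimpleGraph.Hom.ofLE hle), hc.map Function.bijective_id⟩
  · rintro ⟨v, c, hc⟩
    have hlen : c.edges.length = n + n := by
      rw [SimpleGraph.Walk.length_edges, hc.length_eq]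
      simp [hcard]
    set F : Sym2 (Fin n ⊕ Y) → ℕ :=
      fun e => ∑ i : Fin n, if Sum.inl i ∈ e then 1 else 0 with hFdef
    have hFle : ∀ e ∈ c.edges, F e ≤ 1 := by
      have main : ∀ u w : Fin n ⊕ Y, s(u, w) ∈ c.edges → F s(u, w) ≤ 1 := by
        intro u w he
        have hadj : G.intervalGraph.Adj u w := c.adj_of_mem_edges he
        rcases hadj with (⟨i, y, rfl, rfl, -⟩ | ⟨i, y, rfl, rfl, -⟩) | ⟨y, y', rfl, rfl, -⟩
        · simp [hFdef, Sym2.mem_iff, Finset.filter_eq']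
        · simp [hFdef, Sym2.mem_iff, Finset.filter_eq']
        · simp [hFdef, Sym2.mem_iff, Finset.filter_eq']
      intro e
      induction e using Sym2.ind with
      | _ u w => exact main u w
    have hsum : ∑ i : Fin n, c.edges.countP (fun e => Sum.inl i ∈ e)
        = (c.edges.map F).sum := sum_countP_eq (fun i e => Sum.inl i ∈ e) c.edges
    have h2 : ∀ i : Fin n, 2 ≤ c.edges.countP (fun e => Sum.inl i ∈ e) :=
      fun i => two_le_countP_edges hc.isCycle (hc.mem_support _)
    have hlow : n + n ≤ (c.edges.map F).sum := by
      rw [← hsum]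
      calc n + n = ∑ _i : Fin n, 2 := by simp [Finset.sum_const]; ring
        _ ≤ _ := Finset.sum_le_sum fun i _ => h2 i
    have hgood : ∀ e ∈ c.edges, F e ≠ 0 := by
      intro e he h0
      have h1 : ∀ x ∈ c.edges.map F, x ≤ 1 := by
        intro x hx
        obtain ⟨e', he', rfl⟩ := List.mem_map.mp hx
        exact hFle e' he'
      have h0' : 0 ∈ c.edges.map F := h0 ▸ List.mem_map_of_mem (f := F) he
      have := list_sum_lt h1 h0'
      rw [List.length_map, hlen] at this
      omega
    have hedges : ∀ e ∈ c.edges, e ∈ G.toGraph.edgeSet := by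
      have main : ∀ u w : Fin n ⊕ Y, s(u, w) ∈ c.edges → s(u, w) ∈ G.toGraph.edgeSet := by
        intro u w he
        have hadj : G.intervalGraph.Adj u w := c.adj_of_mem_edges he
        rcases hadj with h | ⟨y, y', rfl, rfl, -⟩
        · exact h
        · exact absurd (by simp [hFdef, Sym2.mem_iff]) (hgood _ he)
      intro e
      induction e using Sym2.ind with
      | _ u w => exact main u w
    refine ⟨v, c.transfer G.toGraph hedges, ?_⟩
    rw [SimpleGraph.Walk.isHamiltonianCycle_iff_isCycle_and_support_count_tail_eq_one] at hc ⊢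
    exact ⟨hc.1.transfer hedges, by
      simpa [SimpleGraph.Walk.support_transfer] using hc.2⟩
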